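/- arXiv:1906.00843 — 4 statements merged into one kernel-verified Lean document; each statement's English description precedes it below -/
import Mathlib

section
/- Let κ be a regular uncountable cardinal and λ < b(κ). Then there is no club-supported (κ, λ)-gap of slaloms: whenever (u_α)_{α<κ} is a ⊆*-increasing sequence of club-supported slaloms, (v_ξ)_{ξ<λ} is a ⊆*-decreasing sequence of club-supported slaloms, and u_α ⊆* v_ξ for all α < κ and ξ < λ, then there exists a club-supported slalom w with u_α ⊆* w ⊆* v_ξ for all α < κ and ξ < λ. -/
noncomputable section

open Cardinal Set

universe u

namespace PT

/-- `A ⊆* B` (mod `< κ`): all but fewer than `κ` many elements of `A` lie in `B`. -/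
def AlmostSub (κ : Cardinal.{u}) (A B : Set κ.ord.ToType) : Prop :=
  #(↥(A \ B)) < κ

/-- `A` is a pseudo-intersection of the family `F`:
it has size `κ` and is almost contained in every member of `F`. -/
def IsPseudoInter (κ : Cardinal.{u}) (F : Set (Set κ.ord.ToType)) (A : Set κ.ord.ToType) : Prop :=
  #(↥A) = κ ∧ ∀ B ∈ F, AlmostSub κ A B

/-- The strong intersection property: every subfamily of size `< κ`
has intersection of size `κ`. -/
def HasSIP (κ : Cardinal.{u}) (F : Set (Set κ.ord.ToType)) : Prop :=
  ∀ G ⊆ F, #(↥G) < κ → #(↥(⋂₀ G)) = κ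

/-- `F` is a witness for the pseudo-intersection number: a family of `κ`-sized
subsets of `κ` with the SIP and no pseudo-intersection of size `κ`. -/
def PWitness (κ : Cardinal.{u}) (F : Set (Set κ.ord.ToType)) : Prop :=
  (∀ A ∈ F, #(↥A) = κ) ∧ HasSIP κ F ∧ ¬∃ A, IsPseudoInter κ F A

/-- The pseudo-intersection number `𝔭(κ)`. -/
def pNumber (κ : Cardinal.{u}) : Cardinal.{u} :=
  sInf {c | ∃ F, PWitness κ F ∧ #(↥F) = c}

/-- A tower of length `δ`: a `⊆*`-decreasing sequence of `κ`-sized subsets of `κ`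
with the SIP and no pseudo-intersection of size `κ`. -/
def TowerSeq (κ : Cardinal.{u}) (δ : Ordinal.{u}) (T : Ordinal.{u} → Set κ.ord.ToType) : Prop :=
  (∀ α < δ, #(↥(T α)) = κ) ∧
  (∀ α < δ, ∀ β < δ, α ≤ β → AlmostSub κ (T β) (T α)) ∧
  HasSIP κ (T '' Iio δ) ∧
  ¬∃ A, IsPseudoInter κ (T '' Iio δ) A

/-- The tower number `𝔱(κ)`: the minimal size of a tower of subsets of `κ`. -/
def tNumber (κ : Cardinal.{u}) : Cardinal.{u} :=
  sInf {c | ∃ δ T, TowerSeq κ δ T ∧ #(↥(T '' Iio δ)) = c}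

/-- `C` is a club (closed unbounded set) in `κ`. -/
def IsClubIn (κ : Cardinal.{u}) (C : Set κ.ord.ToType) : Prop :=
  (∀ a : κ.ord.ToType, ∃ b ∈ C, a < b) ∧
  ∀ a : κ.ord.ToType, (C ∩ Iio a).Nonempty → IsLUB (C ∩ Iio a) a → a ∈ C

/-- `S` is stationary in `κ`: it meets every club subset of `κ`. -/
def IsStationaryIn (κ : Cardinal.{u}) (S : Set κ.ord.ToType) : Prop :=
  ∀ C, IsClubIn κ C → (S ∩ C).Nonempty

/-- A slalom on `κ`: a map from a domain `X ⊆ κ` into the nonempty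
subsets of `κ` of size `< κ`. -/
structure Slalom (κ : Cardinal.{u}) where
  dom : Set κ.ord.ToType
  fn : κ.ord.ToType → Set κ.ord.ToType
  nonempty_fn : ∀ ξ ∈ dom, (fn ξ).Nonempty
  small_fn : ∀ ξ ∈ dom, #(↥(fn ξ)) < κ

/-- A slalom is club-supported if its domain is a club in `κ`. -/
def Slalom.ClubSupported {κ : Cardinal.{u}} (s : Slalom κ) : Prop :=
  IsClubIn κ s.dom

/-- `u ⊆* v` for slaloms: `u ξ ⊆ v ξ` for all but fewer than `κ` many
`ξ ∈ dom u ∩ dom v`. -/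
def Slalom.SubStar {κ : Cardinal.{u}} (s t : Slalom κ) : Prop :=
  #(↥{ξ : κ.ord.ToType | ξ ∈ s.dom ∩ t.dom ∧ ¬s.fn ξ ⊆ t.fn ξ}) < κ

/-- A club-supported `(μ, ν)`-gap of slaloms. -/
def ClubGap (κ μ ν : Cardinal.{u}) (u v : Ordinal.{u} → Slalom κ) : Prop :=
  (∀ γ < μ.ord, (u γ).ClubSupported) ∧
  (∀ α < ν.ord, (v α).ClubSupported) ∧
  (∀ γ γ', γ < γ' → γ' < μ.ord → (u γ).SubStar (u γ')) ∧
  (∀ α α', α < α' → α' < ν.ord → (v α').SubStar (v α)) ∧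
  (∀ γ < μ.ord, ∀ α < ν.ord, (u γ).SubStar (v α)) ∧
  ¬∃ w : Slalom κ, w.ClubSupported ∧ (∀ γ < μ.ord, (u γ).SubStar w) ∧
    ∀ α < ν.ord, w.SubStar (v α)

/-- `f ≤* g`: `f ξ ≤ g ξ` for all but fewer than `κ` many `ξ < κ`. -/
def LeStar (κ : Cardinal.{u}) (f g : κ.ord.ToType → κ.ord.ToType) : Prop :=
  #(↥{ξ : κ.ord.ToType | ¬f ξ ≤ g ξ}) < κ

/-- The bounding number `𝔟(κ)`. -/
def bNumber (κ : Cardinal.{u}) : Cardinal.{u} :=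
  sInf {c | ∃ B : Set (κ.ord.ToType → κ.ord.ToType),
    (¬∃ g, ∀ f ∈ B, LeStar κ f g) ∧ #(↥B) = c}

/-- `𝔭_cl(κ)`: minimal size of a family of clubs in `κ` with no
pseudo-intersection of size `κ`. -/
def pClNumber (κ : Cardinal.{u}) : Cardinal.{u} :=
  sInf {c | ∃ F : Set (Set κ.ord.ToType), (∀ C ∈ F, IsClubIn κ C) ∧
    (¬∃ A, IsPseudoInter κ F A) ∧ #(↥F) = c}

/-- `𝔱_cl(κ)`: minimal size of a `⊆*`-well-ordered family of clubs in `κ`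
with no pseudo-intersection of size `κ`. -/
def tClNumber (κ : Cardinal.{u}) : Cardinal.{u} :=
  sInf {c | ∃ (δ : Ordinal.{u}) (T : Ordinal.{u} → Set κ.ord.ToType),
    (∀ α < δ, IsClubIn κ (T α)) ∧
    (∀ α < δ, ∀ β < δ, α ≤ β → AlmostSub κ (T β) (T α)) ∧
    (¬∃ A, IsPseudoInter κ (T '' Iio δ) A) ∧ #(↥(T '' Iio δ)) = c}


/-- `F` is a `κ`-complete filter on `κ`: it contains `κ`, is closed upwards,
and is closed under intersections of fewer than `κ` of its members. -/
def IsKappaCompleteFilter (κ : Cardinal.{u}) (F : Set (Set κ.ord.ToType)) : Prop :=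
  Set.univ ∈ F ∧ (∀ A ∈ F, ∀ B, A ⊆ B → B ∈ F) ∧
  ∀ G ⊆ F, #(↥G) < κ → ⋂₀ G ∈ F



/-- `𝔭_F(κ)`: minimal size of a subfamily of `F` with no pseudo-intersection. -/
def pFNumber (κ : Cardinal.{u}) (F : Set (Set κ.ord.ToType)) : Cardinal.{u} :=
  sInf {c | ∃ B ⊆ F, (¬∃ A, IsPseudoInter κ B A) ∧ #(↥B) = c}

/-- The finite intersection property. -/
def HasFIP (κ : Cardinal.{u}) (F : Set (Set κ.ord.ToType)) : Prop :=
  ∀ G ⊆ F, G.Finite → #(↥(⋂₀ G)) = κ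

/-- `𝔭*(κ)`. -/
def pStarNumber (κ : Cardinal.{u}) : Cardinal.{u} :=
  sInf {c | ∃ F : Set (Set κ.ord.ToType), (∀ A ∈ F, #(↥A) = κ) ∧ HasFIP κ F ∧
    (¬∃ A, IsPseudoInter κ F A) ∧ #(↥F) = c}



/-- `𝔱*(κ)`. -/
def tStarNumber (κ : Cardinal.{u}) : Cardinal.{u} :=
  sInf {c | ∃ (δ : Ordinal.{u}) (T : Ordinal.{u} → Set κ.ord.ToType),
    (∀ α < δ, #(↥(T α)) = κ) ∧
    (∀ α < δ, ∀ β < δ, α ≤ β → AlmostSub κ (T β) (T α)) ∧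
    (¬∃ A, IsPseudoInter κ (T '' Iio δ) A) ∧ #(↥(T '' Iio δ)) = c}

/-- `D` is dense in the poset `P`. -/
def DenseBelow {P : Type u} [Preorder P] (D : Set P) : Prop :=
  ∀ p : P, ∃ q ∈ D, q ≤ p

/-- Two conditions are compatible: they have a common extension. -/
def Compat {P : Type u} [Preorder P] (p q : P) : Prop :=
  ∃ r, r ≤ p ∧ r ≤ q

/-- A filter on a poset: upward closed and downward directed. -/
def IsPosetFilter {P : Type u} [Preorder P] (G : Set P) : Prop :=
  (∀ p ∈ G, ∀ q, p ≤ q → q ∈ G) ∧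
  ∀ p ∈ G, ∀ q ∈ G, ∃ r ∈ G, r ≤ p ∧ r ≤ q

/-- A set `C` of conditions is `κ`-directed: every subset of `C` of size `< κ`
has a lower bound (in `P`). -/
def KDirected (κ : Cardinal.{u}) {P : Type u} [Preorder P] (C : Set P) : Prop :=
  ∀ D ⊆ C, #(↥D) < κ → ∃ q : P, ∀ p ∈ D, q ≤ p

/-- `P` is `κ`-centered with canonical lower bounds. -/
def KCenteredCanonical (κ : Cardinal.{u}) (P : Type u) [Preorder P] : Prop :=
  ∃ C : Ordinal.{u} → Set P,
    (∀ p : P, ∃ γ < κ.ord, p ∈ C γ) ∧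
    (∀ γ < κ.ord, KDirected κ (C γ)) ∧
    ∃ f : Ordinal.{u} → (Ordinal.{u} → Ordinal.{u}) → Ordinal.{u},
      ∀ δ < κ.ord, ∀ (p : Ordinal.{u} → P) (g : Ordinal.{u} → Ordinal.{u}),
        (∀ α < δ, g α < κ.ord ∧ p α ∈ C (g α)) →
        (∀ α < δ, ∀ β < δ, α ≤ β → p β ≤ p α) →
        f δ g < κ.ord ∧ ∃ q ∈ C (f δ g), ∀ α < δ, q ≤ p α

/-- Below every condition there is an antichain of size `κ`. -/
def KAntichainsBelow (κ : Cardinal.{u}) (P : Type u) [Preorder P] : Prop :=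
  ∀ p : P, ∃ A : Set P, (∀ a ∈ A, a ≤ p) ∧
    (∀ a ∈ A, ∀ b ∈ A, a ≠ b → ¬Compat a b) ∧ #(↥A) = κ



/-- The ordinal corresponding to an element of `o.ToType`. -/
def ordOf {o : Ordinal.{u}} (i : o.ToType) : Ordinal.{u} :=
  ((Ordinal.ToType.mk (o := o)).symm i).1

/-- `P` is stationary `κ⁺`-Knaster. -/
def StationaryKnaster (κ : Cardinal.{u}) (P : Type u) [Preorder P] : Prop :=
  ∀ p : (Order.succ κ).ord.ToType → P,
    ∃ (E : Set (Order.succ κ).ord.ToType)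
      (f : (Order.succ κ).ord.ToType → (Order.succ κ).ord.ToType),
      IsClubIn (Order.succ κ) E ∧
      (∀ i ∈ E, (ordOf i).cof = κ → f i < i) ∧
      ∀ i ∈ E, ∀ j ∈ E, (ordOf i).cof = κ → (ordOf j).cof = κ →
        f i = f j → Compat (p i) (p j)

/-- `P` is `κ`-good-Knaster (property `(∗_κ)`). -/
def GoodKnaster (κ : Cardinal.{u}) (P : Type u) [Preorder P] : Prop :=
  StationaryKnaster κ P ∧
  (∀ p : ℕ → P, (∀ m n : ℕ, m ≤ n → p n ≤ p m) → ∃ q, IsGLB (Set.range p) q) ∧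
  (∀ p q : P, Compat p q → ∃ r, IsGLB {p, q} r) ∧
  ∀ δ < κ.ord, ∀ p : Ordinal.{u} → P,
    (∀ α < δ, ∀ β < δ, α ≤ β → p β ≤ p α) → ∃ q, ∀ α < δ, q ≤ p α

/-- `MA(κ-good-Knaster)`. -/
def MAGoodKnaster (κ : Cardinal.{u}) : Prop :=
  ∀ (P : Type u) [PartialOrder P], GoodKnaster κ P →
    ∀ D : Set (Set P), (∀ d ∈ D, DenseBelow d) → #(↥D) < 2 ^ κ →
      ∃ G : Set P, IsPosetFilter G ∧ ∀ d ∈ D, (G ∩ d).Nonempty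

/-- A slalom based on a set `C`. -/
def BasedSlalom (κ : Cardinal.{u}) (C : Set κ.ord.ToType)
    (f : κ.ord.ToType → Set κ.ord.ToType) : Prop :=
  ∀ ξ ∈ C, (f ξ).Nonempty ∧ #(↥(f ξ)) < κ

/-- `f ⊆* g` for `C`-based slaloms. -/
def BasedSubStar (κ : Cardinal.{u}) (C : Set κ.ord.ToType)
    (f g : κ.ord.ToType → Set κ.ord.ToType) : Prop :=
  #(↥{ξ : κ.ord.ToType | ξ ∈ C ∧ ¬f ξ ⊆ g ξ}) < κ

/-- A `(lam, mu)`-tight gap of slaloms based on the club `C`. -/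
def TightGap (κ lam mu : Cardinal.{u}) (C : Set κ.ord.ToType)
    (U V : Ordinal.{u} → κ.ord.ToType → Set κ.ord.ToType) : Prop :=
  IsClubIn κ C ∧
  (∀ α < lam.ord, BasedSlalom κ C (U α)) ∧
  (∀ β < mu.ord, BasedSlalom κ C (V β)) ∧
  (∀ α α', α < α' → α' < lam.ord → ∀ β β', β < β' → β' < mu.ord →
    #(↥{ξ : κ.ord.ToType | ξ ∈ C ∧
      ¬(U α ξ ⊂ U α' ξ ∧ U α' ξ ⊂ V β' ξ ∧ V β' ξ ⊂ V β ξ)}) < κ) ∧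
  (∀ w, BasedSlalom κ C w → (∀ β < mu.ord, BasedSubStar κ C w (V β)) →
    ∃ α < lam.ord, BasedSubStar κ C w (U α)) ∧
  (∀ w, BasedSlalom κ C w → (∀ α < lam.ord, BasedSubStar κ C (U α) w) →
    ∃ β < mu.ord, BasedSubStar κ C (V β) w)

/-- `s_X ξ`: the least element of `X` above `ξ` (junk value `ξ` if none exists). -/
def nextIn (κ : Cardinal.{u}) (X : Set κ.ord.ToType) (ξ : κ.ord.ToType) : κ.ord.ToType :=
  haveI := Classical.dec {η : κ.ord.ToType | η ∈ X ∧ ξ < η}.Nonempty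
  if h : {η : κ.ord.ToType | η ∈ X ∧ ξ < η}.Nonempty then
    wellFounded_lt.min {η : κ.ord.ToType | η ∈ X ∧ ξ < η} h
  else ξ




theorem ordOf_lt' {o : Ordinal.{u}} (i : o.ToType) : ordOf i < o :=
  (((Ordinal.ToType.mk (o := o))).symm i).2

theorem ordOf_lt_ordOf {o : Ordinal.{u}} {i j : o.ToType} : ordOf i < ordOf j ↔ i < j := by
  rw [ordOf, ordOf, Subtype.coe_lt_coe]
  exact ((Ordinal.ToType.mk (o := o))).symm.lt_iff_lt

theorem ordOf_le_ordOf {o : Ordinal.{u}} {i j : o.ToType} : ordOf i ≤ ordOf j ↔ i ≤ j := by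
  rw [ordOf, ordOf, Subtype.coe_le_coe]
  exact ((Ordinal.ToType.mk (o := o))).symm.le_iff_le

theorem ordOf_enum {o : Ordinal.{u}} {a : Ordinal.{u}} (h : a < o) :
    ordOf ((Ordinal.ToType.mk (o := o)) ⟨a, h⟩) = a :=
  congrArg Subtype.val (((Ordinal.ToType.mk (o := o))).symm_apply_apply _)

theorem mk_Iio_lt (κ : Cardinal.{u}) (a : κ.ord.ToType) : #(Iio a) < κ := by
  have h2 := Cardinal.lt_ord.mp (Ordinal.typein_lt_self a)
  exact h2

theorem mk_Iic_lt (κ : Cardinal.{u}) (hreg : κ.IsRegular) (a : κ.ord.ToType) : #(Iic a) < κ := by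
  have : #(Iic a) ≤ #(Iio a) + #({a} : Set κ.ord.ToType) := by
    rw [← Set.Iio_union_right]; exact mk_union_le _ _
  refine this.trans_lt (Cardinal.add_lt_of_lt hreg.aleph0_le (mk_Iio_lt κ a) ?_)
  rw [mk_singleton]
  exact one_lt_aleph0.trans_le hreg.aleph0_le

theorem exists_strict_bound (κ : Cardinal.{u}) (hreg : κ.IsRegular)
    (S : Set κ.ord.ToType) (hS : #S < κ) : ∃ b : κ.ord.ToType, ∀ x ∈ S, x < b := by
  have hlim : Order.IsSuccLimit κ.ord := Cardinal.isSuccLimit_ord hreg.aleph0_le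
  have hsup : (⨆ x : S, Order.succ (ordOf x.1)) < κ.ord :=
    Cardinal.iSup_lt_ord_of_isRegular hreg hS fun x => hlim.succ_lt (ordOf_lt' x.1)
  refine ⟨(Ordinal.ToType.mk (o := κ.ord)) ⟨_, hsup⟩, fun x hx => ?_⟩
  rw [← ordOf_lt_ordOf, ordOf_enum]
  exact lt_of_lt_of_le (Order.lt_succ _) (le_ciSup (Ordinal.bddAbove_range _) (⟨x, hx⟩ : S))


/-- Let κ be regular uncountable and λ < b(κ). Then there is no
club-supported (κ, λ)-gap of slaloms: any ⊆*-increasing κ-sequence of club-supported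
slaloms sitting ⊆*-below a ⊆*-decreasing λ-sequence of club-supported slaloms can be
interpolated by a club-supported slalom. -/
theorem no_kappa_lambda_gap_of_lt_bNumber (κ : Cardinal.{u}) (hreg : κ.IsRegular)
    (hunc : ℵ₀ < κ) (lam : Cardinal.{u}) (hlam : lam < bNumber κ)
    (u v : Ordinal.{u} → Slalom κ)
    (hu : ∀ α < κ.ord, (u α).ClubSupported)
    (hv : ∀ ξ < lam.ord, (v ξ).ClubSupported)
    (huinc : ∀ α β, α < β → β < κ.ord → (u α).SubStar (u β))
    (hvdec : ∀ ξ η, ξ < η → η < lam.ord → (v η).SubStar (v ξ))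
    (huv : ∀ α < κ.ord, ∀ ξ < lam.ord, (u α).SubStar (v ξ)) :
    ∃ w : Slalom κ, w.ClubSupported ∧ (∀ α < κ.ord, (u α).SubStar w) ∧
      ∀ ξ < lam.ord, w.SubStar (v ξ) := by
  classical
  have hA : ℵ₀ ≤ κ := hreg.aleph0_le
  have hlim : Order.IsSuccLimit κ.ord := Cardinal.isSuccLimit_ord hA
  have h0κ : (0 : Ordinal) < κ.ord := hlim.pos
  -- strict bounds for the bad sets between u's and v's
  have hF0 : ∀ (ξ : lam.ord.ToType) (β : κ.ord.ToType), ∃ b : κ.ord.ToType,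
      ∀ ζ ∈ {ζ : κ.ord.ToType | ζ ∈ (u (ordOf β)).dom ∩ (v (ordOf ξ)).dom ∧
        ¬(u (ordOf β)).fn ζ ⊆ (v (ordOf ξ)).fn ζ}, ζ < b := fun ξ β =>
    exists_strict_bound κ hreg _ (huv (ordOf β) (ordOf_lt' β) (ordOf ξ) (ordOf_lt' ξ))
  choose F hF using hF0
  -- monotone majorants G ξ of the F ξ
  have hGord : ∀ (ξ : lam.ord.ToType) (η : κ.ord.ToType),
      (⨆ β : (Iic η : Set κ.ord.ToType), Order.succ (ordOf (F ξ β.1))) < κ.ord := fun ξ η =>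
    Cardinal.iSup_lt_ord_of_isRegular hreg (mk_Iic_lt κ hreg η)
      (fun β => hlim.succ_lt (ordOf_lt' _))
  set G : lam.ord.ToType → κ.ord.ToType → κ.ord.ToType := fun ξ η =>
    (Ordinal.ToType.mk (o := κ.ord)) ⟨_, hGord ξ η⟩ with hGdef
  have hG1 : ∀ (ξ : lam.ord.ToType) (η β : κ.ord.ToType), β ≤ η → F ξ β < G ξ η := by
    intro ξ η β hβ
    rw [← ordOf_lt_ordOf]
    simp only [hGdef, ordOf_enum]
    exact lt_of_lt_of_le (Order.lt_succ _)
      (le_ciSup (Ordinal.bddAbove_range _) (⟨β, hβ⟩ : (Iic η : Set κ.ord.ToType)))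
  have hGmono : ∀ (ξ : lam.ord.ToType) (η η' : κ.ord.ToType), η ≤ η' → G ξ η ≤ G ξ η' := by
    intro ξ η η' h
    rw [← ordOf_le_ordOf]
    simp only [hGdef, ordOf_enum]
    exact ciSup_le' fun β =>
      le_ciSup (Ordinal.bddAbove_range _) (⟨β.1, β.2.trans h⟩ : (Iic η' : Set κ.ord.ToType))
  -- bound the G's by a single g, using lam < 𝔟(κ)
  obtain ⟨g, hg⟩ : ∃ g : κ.ord.ToType → κ.ord.ToType, ∀ f ∈ Set.range G, LeStar κ f g := by
    by_contra hno
    have hmem : #(Set.range G) ∈ {c | ∃ B : Set (κ.ord.ToType → κ.ord.ToType),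
        (¬∃ g, ∀ f ∈ B, LeStar κ f g) ∧ #(↥B) = c} := ⟨Set.range G, hno, rfl⟩
    have h1 : bNumber κ ≤ #(Set.range G) := csInf_le' hmem
    have h2 : #(Set.range G) ≤ lam := by
      refine Cardinal.mk_range_le.trans ?_
      rw [Cardinal.mk_toType, Cardinal.card_ord]
    exact absurd hlam (not_lt.mpr (h1.trans h2))
  have hc0 : ∀ ξ : lam.ord.ToType, ∃ cb : κ.ord.ToType,
      ∀ η ∈ {η : κ.ord.ToType | ¬G ξ η ≤ g η}, η < cb := fun ξ =>
    exists_strict_bound κ hreg _ (hg (G ξ) ⟨ξ, rfl⟩)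
  choose c hc using hc0
  have hc' : ∀ (ξ : lam.ord.ToType) (η : κ.ord.ToType), c ξ ≤ η → G ξ η ≤ g η := by
    intro ξ η h
    by_contra hn
    exact absurd h (not_le.mpr (hc ξ η hn))
  -- the interpolating slalom
  set J : κ.ord.ToType → Set κ.ord.ToType := fun ζ =>
    {β | (∃ η, β ≤ η ∧ η ≤ ζ ∧ g η ≤ ζ) ∧ ζ ∈ (u (ordOf β)).dom} with hJ
  set wfn : κ.ord.ToType → Set κ.ord.ToType := fun ζ =>
    (u 0).fn ζ ∪ ⋃ β ∈ J ζ, (u (ordOf β)).fn ζ with hwfn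
  have hu0 : (u 0).ClubSupported := hu 0 h0κ
  have hwne : ∀ ζ ∈ (u 0).dom, (wfn ζ).Nonempty := fun ζ hζ =>
    Set.Nonempty.mono Set.subset_union_left ((u 0).nonempty_fn ζ hζ)
  have hwsm : ∀ ζ ∈ (u 0).dom, #(↥(wfn ζ)) < κ := by
    intro ζ hζ
    have hJsub : J ζ ⊆ Iic ζ := by
      rintro β ⟨⟨η, hβη, hηζ, -⟩, -⟩
      exact hβη.trans hηζ
    have h1 : #(↥(⋃ β ∈ J ζ, (u (ordOf β)).fn ζ)) < κ := by
      rw [Set.biUnion_eq_iUnion]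
      refine Cardinal.mk_iUnion_le_sum_mk.trans_lt (Cardinal.sum_lt_of_isRegular hreg ?_ ?_)
      · exact (Cardinal.mk_le_mk_of_subset hJsub).trans_lt (mk_Iic_lt κ hreg ζ)
      · intro β
        exact (u (ordOf β.1)).small_fn ζ β.2.2
    exact (mk_union_le _ _).trans_lt (Cardinal.add_lt_of_lt hA ((u 0).small_fn ζ hζ) h1)
  refine ⟨⟨(u 0).dom, wfn, hwne, hwsm⟩, hu0, ?_, ?_⟩
  · -- all u α are almost below w
    intro α hα
    set βα : κ.ord.ToType := (Ordinal.ToType.mk (o := κ.ord)) ⟨α, hα⟩ with hβα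
    have hβαo : ordOf βα = α := by rw [hβα]; exact ordOf_enum _
    show #(↥{ζ : κ.ord.ToType | ζ ∈ (u α).dom ∩ (u 0).dom ∧ ¬(u α).fn ζ ⊆ wfn ζ}) < κ
    have key : ∀ ζ : κ.ord.ToType, max βα (g βα) ≤ ζ → ζ ∈ (u α).dom →
        (u α).fn ζ ⊆ wfn ζ := by
      intro ζ hζ hdom
      have hmem : βα ∈ J ζ :=
        ⟨⟨βα, le_refl _, (le_max_left _ _).trans hζ, (le_max_right _ _).trans hζ⟩,
          by rw [hβαo]; exact hdom⟩
      have hsb : (u (ordOf βα)).fn ζ ⊆ ⋃ β ∈ J ζ, (u (ordOf β)).fn ζ :=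
        Set.subset_biUnion_of_mem (u := fun β => (u (ordOf β)).fn ζ) hmem
      rw [hβαo] at hsb
      exact hsb.trans Set.subset_union_right
    have hsub : {ζ : κ.ord.ToType | ζ ∈ (u α).dom ∩ (u 0).dom ∧ ¬(u α).fn ζ ⊆ wfn ζ} ⊆
        Iio (max βα (g βα)) := by
      intro ζ hζ
      by_contra hn
      exact hζ.2 (key ζ (not_lt.mp hn) hζ.1.1)
    exact (Cardinal.mk_le_mk_of_subset hsub).trans_lt (mk_Iio_lt κ _)
  · -- w is almost below every v ξ
    intro ξo hξ
    set ξ : lam.ord.ToType := (Ordinal.ToType.mk (o := lam.ord)) ⟨ξo, hξ⟩ with hξdef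
    have hord : ordOf ξ = ξo := by rw [hξdef]; exact ordOf_enum _
    set β0 : κ.ord.ToType := (Ordinal.ToType.mk (o := κ.ord)) ⟨0, h0κ⟩ with hβ0
    have hβ0o : ordOf β0 = (0 : Ordinal) := by rw [hβ0]; exact ordOf_enum _
    set b : κ.ord.ToType := max (g (c ξ)) (F ξ β0) with hb
    show #(↥{ζ : κ.ord.ToType | ζ ∈ (u 0).dom ∩ (v ξo).dom ∧ ¬wfn ζ ⊆ (v ξo).fn ζ}) < κ
    have key : ∀ ζ : κ.ord.ToType, b ≤ ζ → ζ ∈ (u 0).dom → ζ ∈ (v ξo).dom →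
        wfn ζ ⊆ (v ξo).fn ζ := by
      intro ζ hbζ hd0 hdv
      apply Set.union_subset
      · by_contra hn
        have hmem : ζ ∈ {ζ : κ.ord.ToType | ζ ∈ (u (ordOf β0)).dom ∩ (v (ordOf ξ)).dom ∧
            ¬(u (ordOf β0)).fn ζ ⊆ (v (ordOf ξ)).fn ζ} := by
          rw [hβ0o, hord]
          exact ⟨⟨hd0, hdv⟩, hn⟩
        exact absurd ((le_max_right _ _).trans hbζ) (not_le.mpr (hF ξ β0 ζ hmem))
      · refine Set.iUnion₂_subset fun β hβ => ?_
        obtain ⟨⟨η, hβη, hηζ, hgη⟩, hdomβ⟩ := hβ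
        have hFle : F ξ β ≤ ζ := by
          rcases le_total (c ξ) η with h | h
          · exact ((hG1 ξ η β hβη).trans_le ((hc' ξ η h).trans hgη)).le
          · exact ((hG1 ξ η β hβη).trans_le (((hGmono ξ η (c ξ) h).trans
              (hc' ξ (c ξ) le_rfl)).trans ((le_max_left _ _).trans hbζ))).le
        by_contra hn
        have hmem : ζ ∈ {ζ : κ.ord.ToType | ζ ∈ (u (ordOf β)).dom ∩ (v (ordOf ξ)).dom ∧
            ¬(u (ordOf β)).fn ζ ⊆ (v (ordOf ξ)).fn ζ} := by
          rw [hord]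
          exact ⟨⟨hdomβ, hdv⟩, hn⟩
        exact absurd hFle (not_le.mpr (hF ξ β ζ hmem))
    have hsub : {ζ : κ.ord.ToType | ζ ∈ (u 0).dom ∩ (v ξo).dom ∧ ¬wfn ζ ⊆ (v ξo).fn ζ} ⊆
        Iio b := by
      intro ζ hζ
      by_contra hn
      exact hζ.2 (key ζ (not_lt.mp hn) hζ.1.1 hζ.1.2)
    exact (Cardinal.mk_le_mk_of_subset hsub).trans_lt (mk_Iio_lt κ b)


end PT
end
end

section
/- Let κ be a regular uncountable cardinal with κ = κ^{<κ}. Then there exists a sequence (v_α)_{α<κ} of slaloms, each with domain all of κ (so v_α : κ → [κ]^{<κ} \ {∅}), which is ⊆*-decreasing (v_β ⊆* v_α for α < β < κ) and has no lower bound supported on a stationary set: there is no stationary set S ⊆ κ and function w : S → [κ]^{<κ} \ {∅} such that w ⊆* v_α for all α < κ. -/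
noncomputable section

open Cardinal Set

universe u

namespace PT

section Statement4Aux

variable {κ : Cardinal.{u}}

lemma pt4_bound (hreg : κ.IsRegular) {A : Set κ.ord.ToType}
    (hA : #(↥A) < κ) : ∃ b : κ.ord.ToType, ∀ a ∈ A, a < b := by
  classical
  have hlt : Ordinal.lsub.{u, u} (fun a : A => ordOf a.1) < κ.ord :=
    Cardinal.lsub_lt_ord_of_isRegular hreg hA
      fun a => (((Ordinal.ToType.mk (o := κ.ord))).symm a.1).2
  refine ⟨(Ordinal.ToType.mk (o := κ.ord)) ⟨_, hlt⟩, fun a ha => ?_⟩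
  have h1 : (((Ordinal.ToType.mk (o := κ.ord))).symm a : Ordinal) <
      Ordinal.lsub.{u, u} (fun a : A => ordOf a.1) :=
    Ordinal.lt_lsub (fun a : A => ordOf a.1) ⟨a, ha⟩
  have h2 : ((Ordinal.ToType.mk (o := κ.ord))).symm a < (⟨_, hlt⟩ : Set.Iio κ.ord) :=
    Subtype.coe_lt_coe.mp h1
  have h3 := ((Ordinal.ToType.mk (o := κ.ord))).lt_iff_lt.mpr h2
  rwa [OrderIso.apply_symm_apply] at h3

lemma pt4_exists_isLUB {A : Set κ.ord.ToType} {b : κ.ord.ToType}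
    (hb : b ∈ upperBounds A) : ∃ x, IsLUB A x := by
  have hub : (upperBounds A).Nonempty := ⟨b, hb⟩
  exact ⟨wellFounded_lt.min _ hub, wellFounded_lt.min_mem _ hub,
    fun y hy => not_lt.mp (wellFounded_lt.not_lt_min _ hy)⟩

lemma pt4_ordPos (hunc : ℵ₀ < κ) : (0 : Ordinal.{u}) < κ.ord := by
  have : (0 : Cardinal.{u}) < κ := lt_trans Cardinal.aleph0_pos hunc
  rw [← Cardinal.ord_zero]
  exact Cardinal.ord_lt_ord.mpr this

/-- the `α`-th element of `κ.ord.ToType` (junk `0`-th element out of range). -/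
noncomputable def pt4a (κ : Cardinal.{u}) (hpos : (0 : Ordinal.{u}) < κ.ord)
    (α : Ordinal.{u}) : κ.ord.ToType :=
  (Ordinal.ToType.mk (o := κ.ord)) ⟨if h : α < κ.ord then α else 0, by
    split
    · assumption
    · exact hpos⟩

lemma pt4a_lt (hpos : (0 : Ordinal.{u}) < κ.ord) {α β : Ordinal.{u}}
    (hα : α < κ.ord) (hβ : β < κ.ord) (h : α < β) :
    pt4a κ hpos α < pt4a κ hpos β :=
  ((Ordinal.ToType.mk (o := κ.ord))).lt_iff_lt.mpr
    (Subtype.mk_lt_mk.mpr (by rw [dif_pos hα, dif_pos hβ]; exact h))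

lemma pt4a_ordOf (hpos : (0 : Ordinal.{u}) < κ.ord) (a : κ.ord.ToType) :
    pt4a κ hpos (ordOf a) = a := by
  have h : ordOf a < κ.ord := (((Ordinal.ToType.mk (o := κ.ord))).symm a).2
  refine Eq.trans (congrArg ((Ordinal.ToType.mk (o := κ.ord))) (Subtype.ext ?_))
    (((Ordinal.ToType.mk (o := κ.ord))).apply_symm_apply a)
  show (if h' : ordOf a < κ.ord then ordOf a else 0) =
    (((Ordinal.ToType.mk (o := κ.ord))).symm a : Ordinal)
  rw [dif_pos h]
  rfl

lemma pt4_mk_Iic_lt (hreg : κ.IsRegular) (x : κ.ord.ToType) : #(↥(Set.Iic x)) < κ := by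
  haveI : NoMaxOrder κ.ord.ToType := Cardinal.noMaxOrder hreg.aleph0_le
  obtain ⟨y, hy⟩ := exists_gt x
  exact lt_of_le_of_lt
    (Cardinal.mk_le_mk_of_subset fun z hz => Set.mem_Iio.mpr
      (lt_of_le_of_lt (Set.mem_Iic.mp hz) hy))
    (Cardinal.mk_Iio_ord_toType y)

/-- The slalom sequence for Statement 4. -/
noncomputable def pt4v (κ : Cardinal.{u}) (hunc : ℵ₀ < κ) (α : Ordinal.{u}) : Slalom κ where
  dom := Set.univ
  fn ξ := if pt4a κ (pt4_ordPos hunc) α < ξ then Set.Ico (pt4a κ (pt4_ordPos hunc) α) ξ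
    else {pt4a κ (pt4_ordPos hunc) α}
  nonempty_fn := by
    intro ξ _
    split
    next h => exact ⟨pt4a κ (pt4_ordPos hunc) α, le_rfl, h⟩
    next h => exact ⟨pt4a κ (pt4_ordPos hunc) α, rfl⟩
  small_fn := by
    intro ξ _
    split
    · exact lt_of_le_of_lt (Cardinal.mk_le_mk_of_subset Set.Ico_subset_Iio_self)
        (Cardinal.mk_Iio_ord_toType ξ)
    · rw [Cardinal.mk_singleton]
      exact lt_trans Cardinal.one_lt_aleph0 hunc

lemma pt4v_fn (hunc : ℵ₀ < κ) (α : Ordinal.{u}) (ξ : κ.ord.ToType)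
    (h : pt4a κ (pt4_ordPos hunc) α < ξ) :
    (pt4v κ hunc α).fn ξ = Set.Ico (pt4a κ (pt4_ordPos hunc) α) ξ := if_pos h

lemma pt4v_fn_ordOf (hunc : ℵ₀ < κ) (a ξ : κ.ord.ToType) (h : a < ξ) :
    (pt4v κ hunc (ordOf a)).fn ξ = Set.Ico a ξ := by
  have ha := pt4a_ordOf (pt4_ordPos hunc) a
  rw [pt4v_fn hunc (ordOf a) ξ (by rw [ha]; exact h), ha]

end Statement4Aux

/-- Let κ = κ^{<κ} be regular uncountable. Then there is a ⊆*-decreasing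
κ-sequence of slaloms with full domain that has no lower bound supported on a
stationary set. -/
theorem exists_decreasing_slaloms_no_stationary_bound (κ : Cardinal.{u})
    (hreg : κ.IsRegular) (hunc : ℵ₀ < κ) (hpow : κ ^< κ = κ) :
    ∃ v : Ordinal.{u} → Slalom κ,
      (∀ α < κ.ord, (v α).dom = Set.univ) ∧
      (∀ α β, α < β → β < κ.ord → (v β).SubStar (v α)) ∧
      ¬∃ w : Slalom κ, IsStationaryIn κ w.dom ∧ ∀ α < κ.ord, w.SubStar (v α) := by
  classical
  have hpos : (0 : Ordinal.{u}) < κ.ord := pt4_ordPos hunc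
  haveI : NoMaxOrder κ.ord.ToType := Cardinal.noMaxOrder hreg.aleph0_le
  refine ⟨pt4v κ hunc, fun α _ => rfl, ?_, ?_⟩
  · -- decreasing
    intro α β hαβ hβ
    have hα : α < κ.ord := hαβ.trans hβ
    have hab : pt4a κ hpos α < pt4a κ hpos β := pt4a_lt hpos hα hβ hαβ
    have hsub : {ξ | ξ ∈ (pt4v κ hunc β).dom ∩ (pt4v κ hunc α).dom ∧
        ¬(pt4v κ hunc β).fn ξ ⊆ (pt4v κ hunc α).fn ξ} ⊆ Set.Iic (pt4a κ hpos β) := by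
      intro ξ hξ
      rw [Set.mem_Iic]
      by_contra hc
      push_neg at hc
      refine hξ.2 ?_
      rw [pt4v_fn hunc β ξ hc, pt4v_fn hunc α ξ (lt_trans hab hc)]
      exact Set.Ico_subset_Ico hab.le le_rfl
    exact lt_of_le_of_lt (Cardinal.mk_le_mk_of_subset hsub) (pt4_mk_Iic_lt hreg _)
  · rintro ⟨w, hstat, hsubs⟩
    -- bounding functions for the bad sets
    have hB : ∀ a : κ.ord.ToType, ∃ b : κ.ord.ToType,
        ∀ ξ ∈ {ξ | ξ ∈ w.dom ∩ (pt4v κ hunc (ordOf a)).dom ∧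
          ¬w.fn ξ ⊆ (pt4v κ hunc (ordOf a)).fn ξ}, ξ < b := fun a =>
      pt4_bound hreg (hsubs (ordOf a) (((Ordinal.ToType.mk (o := κ.ord))).symm a).2)
    choose g hg using hB
    have hh : ∀ a : κ.ord.ToType, ∃ b, g a < b ∧ a < b := by
      intro a
      obtain ⟨b, hb⟩ := exists_gt (max (g a) a)
      exact ⟨b, (le_max_left _ _).trans_lt hb, (le_max_right _ _).trans_lt hb⟩
    choose h hg1 hg2 using hh
    -- key fact
    have key : ∀ a ξ, a < ξ → ξ ∈ w.dom → g a ≤ ξ → w.fn ξ ⊆ Set.Ico a ξ := by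
      intro a ξ haξ hξS hgξ
      by_contra hns
      have hmem : ξ ∈ {ξ | ξ ∈ w.dom ∩ (pt4v κ hunc (ordOf a)).dom ∧
          ¬w.fn ξ ⊆ (pt4v κ hunc (ordOf a)).fn ξ} := by
        refine ⟨⟨hξS, Set.mem_univ ξ⟩, ?_⟩
        rw [pt4v_fn_ordOf hunc a ξ haξ]
        exact hns
      exact absurd (hg a ξ hmem) (not_lt.mpr hgξ)
    -- the club of closure points of h
    set C : Set κ.ord.ToType := {ξ | (∃ a, a < ξ) ∧ ∀ a < ξ, h a < ξ} with hC
    have hstep : ∀ x : κ.ord.ToType, ∃ y, x < y ∧ ∀ a ≤ x, h a < y := by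
      intro x
      obtain ⟨y, hy⟩ := pt4_bound hreg (A := h '' Set.Iic x)
        (lt_of_le_of_lt Cardinal.mk_image_le (pt4_mk_Iic_lt hreg x))
      obtain ⟨z, hz⟩ := exists_gt (max x y)
      exact ⟨z, (le_max_left x y).trans_lt hz,
        fun a hax => lt_trans (hy _ ⟨a, hax, rfl⟩) ((le_max_right x y).trans_lt hz)⟩
    choose step hst1 hst2 using hstep
    have hclub : IsClubIn κ C := by
      constructor
      · -- unbounded
        intro s
        set x : ℕ → κ.ord.ToType := fun n => step^[n] (step s) with hx
        have hxs : ∀ n, x (n + 1) = step (x n) := fun n =>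
          Function.iterate_succ_apply' step n (step s)
        have hcnt : #(↥(Set.range x)) < κ :=
          lt_of_le_of_lt (Set.Countable.le_aleph0 (Set.countable_range x)) hunc
        obtain ⟨b, hb⟩ := pt4_bound hreg hcnt
        obtain ⟨ξ, hξ⟩ := pt4_exists_isLUB (b := b) (fun t ht => (hb t ht).le)
        have hxlt : ∀ n, x n < ξ := by
          intro n
          have h1 : x n < x (n + 1) := by rw [hxs n]; exact hst1 (x n)
          exact lt_of_lt_of_le h1 (hξ.1 (Set.mem_range_self (n + 1)))
        refine ⟨ξ, ⟨⟨x 0, hxlt 0⟩, ?_⟩, lt_trans (hst1 s) (hxlt 0)⟩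
        intro a haξ
        have hnub : a ∉ upperBounds (Set.range x) := fun hub =>
          absurd (hξ.2 hub) (not_le.mpr haξ)
        rw [mem_upperBounds] at hnub
        push_neg at hnub
        obtain ⟨t, ⟨n, rfl⟩, hat⟩ := hnub
        have : h a < x (n + 1) := by rw [hxs n]; exact hst2 (x n) a hat.le
        exact lt_trans this (hxlt (n + 1))
      · -- closed
        intro s hne hlub
        obtain ⟨c, hcC, hcs⟩ := hne
        refine ⟨⟨c, hcs⟩, fun a has => ?_⟩
        have hnub : a ∉ upperBounds (C ∩ Set.Iio s) := fun hub =>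
          absurd (hlub.2 hub) (not_le.mpr has)
        rw [mem_upperBounds] at hnub
        push_neg at hnub
        obtain ⟨t, ⟨htC, hts⟩, hat⟩ := hnub
        exact lt_trans (htC.2 a hat) hts
    -- derive the contradiction
    obtain ⟨ξ, hξS, hξC⟩ := hstat C hclub
    obtain ⟨⟨a₀, ha₀⟩, hcl⟩ := hξC
    have hga₀ : g a₀ ≤ ξ := (lt_trans (hg1 a₀) (hcl a₀ ha₀)).le
    obtain ⟨η, hη⟩ := w.nonempty_fn ξ hξS
    have hηξ : η < ξ := (key a₀ ξ ha₀ hξS hga₀ hη).2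
    have haξ : h η < ξ := hcl η hηξ
    have hga : g (h η) ≤ ξ := (lt_trans (hg1 (h η)) (hcl (h η) haξ)).le
    have hle : h η ≤ η := (key (h η) ξ haξ hξS hga hη).1
    exact absurd (hg2 η) (not_lt.mpr hle)


end PT
end
end

section
/- If κ is an uncountable cardinal with cf(κ) = ω, then t*(κ) is uncountable. -/
noncomputable section

open Cardinal Set

universe u

namespace PT

/-! ### Auxiliary lemmas for Statement 10 -/

private lemma small_union {κ : Cardinal.{u}} {X : Type u} (hκ : ℵ₀ ≤ κ) {s t : Set X}
    (hs : #↥s < κ) (ht : #↥t < κ) : #↥(s ∪ t) < κ :=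
  lt_of_le_of_lt (Cardinal.mk_union_le s t) (Cardinal.add_lt_of_lt hκ hs ht)

private lemma diff_big {κ : Cardinal.{u}} {X : Type u} (hκ : ℵ₀ ≤ κ) {s t : Set X}
    (hs : #↥s = κ) (ht : #↥t < κ) : #↥(s \ t) = κ := by
  refine le_antisymm (hs ▸ Cardinal.mk_le_mk_of_subset diff_subset) ?_
  by_contra h
  push_neg at h
  have hsub : s ⊆ (s \ t) ∪ t := fun x hx => by
    by_cases hxt : x ∈ t
    · exact Or.inr hxt
    · exact Or.inl ⟨hx, hxt⟩
  have : #↥s < κ :=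
    lt_of_le_of_lt (Cardinal.mk_le_mk_of_subset hsub) (small_union hκ h ht)
  exact absurd hs this.ne

private lemma small_biUnion {κ : Cardinal.{u}} {X : Type u} (hκ : ℵ₀ ≤ κ) (A : ℕ → Set X) :
    ∀ n : ℕ, (∀ m < n, #↥(A m) < κ) → #↥(⋃ m, ⋃ (_ : m < n), A m) < κ := by
  intro n
  induction n with
  | zero =>
    intro _
    have : (⋃ m, ⋃ (_ : m < 0), A m) = (∅ : Set X) := by simp
    rw [this, Cardinal.mk_emptyCollection]
    exact Cardinal.aleph0_pos.trans_le hκ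
  | succ n ih =>
    intro h
    have heq : (⋃ m, ⋃ (_ : m < n + 1), A m) =
        (⋃ m, ⋃ (_ : m < n), A m) ∪ A n := by
      ext x
      simp only [Set.mem_iUnion, Set.mem_union, Nat.lt_succ_iff_lt_or_eq]
      constructor
      · rintro ⟨m, hm | rfl, hx⟩
        · exact Or.inl ⟨m, hm, hx⟩
        · exact Or.inr hx
      · rintro (⟨m, hm, hx⟩ | hx)
        · exact ⟨m, Or.inl hm, hx⟩
        · exact ⟨n, Or.inr rfl, hx⟩
    rw [heq]
    exact small_union hκ (ih fun m hm => h m (hm.trans (Nat.lt_succ_self n)))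
      (h n (Nat.lt_succ_self n))

private lemma set_le_kappa (κ : Cardinal.{u}) (s : Set κ.ord.ToType) : #↥s ≤ κ :=
  (Cardinal.mk_set_le s).trans_eq (Cardinal.mk_ord_toType κ)

private lemma cof_seq {κ : Cardinal.{u}} (hcof : κ.ord.cof = ℵ₀) :
    ∃ g : ℕ → Ordinal.{u}, (∀ n, g n < κ.ord) ∧ ∀ o < κ.ord, ∃ n, o ≤ g n := by
  obtain ⟨ι, f, hlsub, hι⟩ := Ordinal.exists_lsub_cof κ.ord
  rw [hcof] at hι
  have hcnt : Countable ι := Cardinal.mk_le_aleph0_iff.1 hι.le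
  have hne : Nonempty ι := Cardinal.mk_ne_zero_iff.1 (by rw [hι]; exact Cardinal.aleph0_ne_zero)
  obtain ⟨e, he⟩ := exists_surjective_nat ι
  refine ⟨fun n => f (e n), fun n => ?_, fun o ho => ?_⟩
  · rw [← hlsub]; exact Ordinal.lt_lsub f (e n)
  · rw [← hlsub] at ho
    obtain ⟨i, hi⟩ := Ordinal.lt_lsub_iff.1 ho
    obtain ⟨n, rfl⟩ := he i
    exact ⟨n, hi⟩

/-- Every countable almost-decreasing family of `κ`-sized sets has a
pseudo-intersection when `cf(κ) = ω`. -/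
private lemma tower_pi {κ : Cardinal.{u}} (hunc : ℵ₀ < κ) (hcof : κ.ord.cof = ℵ₀)
    (δ : Ordinal.{u}) (T : Ordinal.{u} → Set κ.ord.ToType)
    (h1 : ∀ α < δ, #↥(T α) = κ)
    (h2 : ∀ α < δ, ∀ β < δ, α ≤ β → AlmostSub κ (T β) (T α))
    (hc : #↥(T '' Iio δ) ≤ ℵ₀) :
    ∃ A, IsPseudoInter κ (T '' Iio δ) A := by
  have hκ : ℵ₀ ≤ κ := hunc.le
  by_cases hδ : δ = 0
  · refine ⟨univ, ?_, ?_⟩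
    · rw [Cardinal.mk_univ, Cardinal.mk_ord_toType]
    · intro B hB
      exfalso
      obtain ⟨α, hα, -⟩ := hB
      rw [hδ] at hα
      exact absurd hα (zero_le : (0 : Ordinal.{u}) ≤ α).not_gt
  have hne : (T '' Iio δ).Nonempty :=
    ⟨T 0, mem_image_of_mem _ (pos_iff_ne_zero.2 hδ)⟩
  obtain ⟨e, hrange⟩ :=
    (Set.countable_coe_iff.1 (Cardinal.mk_le_aleph0_iff.1 hc)).exists_eq_range hne
  have hidx : ∀ n : ℕ, ∃ α, α < δ ∧ T α = e n := by
    intro n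
    have : e n ∈ T '' Iio δ := by rw [hrange]; exact mem_range_self n
    obtain ⟨α, hα, hTα⟩ := this
    exact ⟨α, hα, hTα⟩
  choose a ha1 ha2 using hidx
  -- running maxima of indices
  let b : ℕ → Ordinal.{u} := fun n => Nat.rec (a 0) (fun k bk => max bk (a (k + 1))) n
  have hb0 : b 0 = a 0 := rfl
  have hbs : ∀ n, b (n + 1) = max (b n) (a (n + 1)) := fun n => rfl
  have hb1 : ∀ n, b n < δ := by
    intro n
    induction n with
    | zero => rw [hb0]; exact ha1 0
    | succ n ih => rw [hbs]; exact max_lt ih (ha1 (n + 1))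
  have hb2 : ∀ m n, m ≤ n → a m ≤ b n := by
    intro m n
    induction n with
    | zero =>
      intro hm
      interval_cases m
      exact le_of_eq hb0.symm
    | succ n ih =>
      intro hm
      rcases Nat.lt_succ_iff_lt_or_eq.1 (Nat.lt_succ_of_le hm) with h | rfl
      · rw [hbs]; exact (ih (Nat.lt_succ_iff.1 h)).trans (le_max_left _ _)
      · rw [hbs]; exact le_max_right _ _
  have hsmall : ∀ n m, m ≤ n → #↥(T (b n) \ e m) < κ := by
    intro n m hm
    rw [← ha2 m]
    exact h2 (a m) (ha1 m) (b n) (hb1 n) (hb2 m n hm)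
  set D : ℕ → Set κ.ord.ToType := fun n => ⋃ m, ⋃ (_ : m < n + 1), (T (b n) \ e m) with hD
  have hDsmall : ∀ n, #↥(D n) < κ := fun n =>
    small_biUnion hκ _ (n + 1) (fun m hm => hsmall n m (Nat.lt_succ_iff.1 hm))
  set S : ℕ → Set κ.ord.ToType := fun n => T (b n) \ D n with hSdef
  have hS : ∀ n, #↥(S n) = κ := fun n => diff_big hκ (h1 _ (hb1 n)) (hDsmall n)
  have hSsub : ∀ n m, m ≤ n → S n ⊆ e m := by
    intro n m hm x hx
    by_contra hxe
    exact hx.2 (Set.mem_iUnion₂.2 ⟨m, Nat.lt_succ_of_le hm, hx.1, hxe⟩)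
  obtain ⟨g, hg1, hg2⟩ := cof_seq hcof
  have hcard : ∀ n, (g n).card < κ := fun n => Cardinal.lt_ord.1 (hg1 n)
  have hAn : ∀ n, ∃ p ⊆ S n, #↥p = (g n).card := fun n =>
    Cardinal.le_mk_iff_exists_subset.1 (by rw [hS n]; exact (hcard n).le)
  choose A hA1 hA2 using hAn
  refine ⟨⋃ n, A n, ?_, ?_⟩
  · refine le_antisymm (set_le_kappa κ _) ?_
    by_contra hlt
    push_neg at hlt
    set c : Cardinal.{u} := #↥(⋃ n, A n) with hcdef
    have hgc : ∀ n, g n < (Order.succ c).ord := by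
      intro n
      rw [Cardinal.lt_ord]
      calc (g n).card = #↥(A n) := (hA2 n).symm
        _ ≤ c := Cardinal.mk_le_mk_of_subset (subset_iUnion A n)
        _ < Order.succ c := Order.lt_succ c
    have hsc : Order.succ c ≤ κ := Order.succ_le_of_lt hlt
    rcases lt_or_eq_of_le hsc with h | h
    · obtain ⟨n, hn⟩ := hg2 (Order.succ c).ord (by rwa [Cardinal.ord_lt_ord])
      exact absurd (hgc n) (not_lt.2 hn)
    · have hc0 : ℵ₀ ≤ c := by
        by_contra h0
        push_neg at h0
        have : Order.succ c ≤ ℵ₀ := Order.succ_le_of_lt h0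
        rw [h] at this
        exact absurd hunc (not_lt.2 this)
      have hreg : Cardinal.IsRegular κ := h ▸ Cardinal.isRegular_succ hc0
      rw [hreg.cof_eq] at hcof
      exact absurd hcof.symm hunc.ne
  · intro B hB
    rw [hrange] at hB
    obtain ⟨n, rfl⟩ := hB
    have hsub : (⋃ k, A k) \ e n ⊆ ⋃ m, ⋃ (_ : m < n), A m := by
      rintro x ⟨hx1, hx2⟩
      obtain ⟨k, hk⟩ := mem_iUnion.1 hx1
      by_cases hkn : n ≤ k
      · exact absurd (hSsub k n hkn (hA1 k hk)) hx2
      · exact Set.mem_iUnion₂.2 ⟨k, not_le.1 hkn, hk⟩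
    exact lt_of_le_of_lt (Cardinal.mk_le_mk_of_subset hsub)
      (small_biUnion hκ A n fun m _ => (hA2 m) ▸ hcard m)

private lemma half_exists {κ : Cardinal.{u}} (hκ : ℵ₀ ≤ κ) {X : Type u} {A : Set X}
    (hA : #↥A = κ) : ∃ B ⊆ A, #↥B = κ ∧ #↥(A \ B) = κ := by
  have hsum : #(↥A ⊕ ↥A) = #↥A := by
    simp only [Cardinal.mk_sum, Cardinal.lift_id, hA]
    exact Cardinal.add_eq_self hκ
  obtain ⟨e⟩ := Cardinal.eq.1 hsum
  set L : Set ↥A := Set.range (fun x => e (Sum.inl x)) with hL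
  refine ⟨Subtype.val '' L, by rintro x ⟨y, -, rfl⟩; exact y.2, ?_, ?_⟩
  · rw [Cardinal.mk_image_eq Subtype.val_injective, hL,
      Cardinal.mk_range_eq (fun x => e (Sum.inl x)) (fun a b hab => Sum.inl_injective (e.injective hab)), hA]
  · have hsub : Subtype.val '' (Set.range fun x => e (Sum.inr x)) ⊆
        A \ Subtype.val '' L := by
      rintro x ⟨y, ⟨z, rfl⟩, rfl⟩
      refine ⟨(e (Sum.inr z)).2, ?_⟩
      rintro ⟨y', hy', hval⟩
      obtain ⟨z', rfl⟩ := hy'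
      have h' := Subtype.val_injective hval
      have := e.injective h'
      simp at this
    refine le_antisymm (hA ▸ Cardinal.mk_le_mk_of_subset diff_subset) ?_
    calc κ = #↥(Subtype.val '' (Set.range fun x => e (Sum.inr x))) := by
          rw [Cardinal.mk_image_eq Subtype.val_injective,
            Cardinal.mk_range_eq (fun x => e (Sum.inr x)) (fun a b hab => Sum.inr_injective (e.injective hab)), hA]
      _ ≤ _ := Cardinal.mk_le_mk_of_subset hsub

private noncomputable def halfSet (κ : Cardinal.{u}) (A : Set κ.ord.ToType) :
    Set κ.ord.ToType :=
  haveI := Classical.dec (∃ B ⊆ A, #↥B = κ ∧ #↥(A \ B) = κ)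
  if h : ∃ B ⊆ A, #↥B = κ ∧ #↥(A \ B) = κ then h.choose else ∅

private lemma halfSet_spec {κ : Cardinal.{u}} (hκ : ℵ₀ ≤ κ) {A : Set κ.ord.ToType}
    (hA : #↥A = κ) :
    halfSet κ A ⊆ A ∧ #↥(halfSet κ A) = κ ∧ #↥(A \ halfSet κ A) = κ := by
  have h := half_exists hκ hA
  rw [halfSet, dif_pos h]
  exact ⟨h.choose_spec.1, h.choose_spec.2⟩

private noncomputable def pick (κ : Cardinal.{u}) (F : Set (Set κ.ord.ToType)) :
    Set κ.ord.ToType :=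
  haveI := Classical.dec (∃ A, IsPseudoInter κ F A)
  if h : ∃ A, IsPseudoInter κ F A then halfSet κ h.choose else ∅

/-- The canonical transfinite tower attempt. -/
private noncomputable def TW (κ : Cardinal.{u}) : Ordinal.{u} → Set κ.ord.ToType :=
  WellFounded.fix wellFounded_lt
    (fun β ih => pick κ {S | ∃ α, ∃ h : α < β, ih α h = S})

private lemma TW_eq (κ : Cardinal.{u}) (β : Ordinal.{u}) :
    TW κ β = pick κ (TW κ '' Iio β) := by
  have hset : {S | ∃ α, ∃ _ : α < β, TW κ α = S} = TW κ '' Iio β := by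
    ext s
    constructor
    · rintro ⟨α, hα, rfl⟩; exact ⟨α, hα, rfl⟩
    · rintro ⟨α, hα, rfl⟩; exact ⟨α, hα, rfl⟩
  have h0 : TW κ β = pick κ {S | ∃ α, ∃ _ : α < β, TW κ α = S} :=
    WellFounded.fix_eq wellFounded_lt
      (fun β ih => pick κ {S | ∃ α, ∃ h : α < β, ih α h = S}) β
  rw [h0, hset]

private lemma TW_spec {κ : Cardinal.{u}} (hκ : ℵ₀ ≤ κ) {β : Ordinal.{u}}
    (h : ∃ A, IsPseudoInter κ (TW κ '' Iio β) A) :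
    ∃ A, IsPseudoInter κ (TW κ '' Iio β) A ∧ TW κ β ⊆ A ∧
      #↥(TW κ β) = κ ∧ #↥(A \ TW κ β) = κ := by
  refine ⟨h.choose, h.choose_spec, ?_⟩
  have hs := halfSet_spec hκ (h.choose_spec.1)
  rw [TW_eq, pick, dif_pos h]
  exact ⟨hs.1, hs.2.1, hs.2.2⟩

private lemma TW_almost {κ : Cardinal.{u}} (hκ : ℵ₀ ≤ κ) {α β : Ordinal.{u}} (hαβ : α < β)
    (hβ : ∃ A, IsPseudoInter κ (TW κ '' Iio β) A) :
    AlmostSub κ (TW κ β) (TW κ α) ∧ #↥(TW κ α \ TW κ β) = κ := by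
  obtain ⟨A, hPI, hsub, hsize, hdiff⟩ := TW_spec hκ hβ
  have hmem : TW κ α ∈ TW κ '' Iio β := mem_image_of_mem _ hαβ
  have hAα : #↥(A \ TW κ α) < κ := hPI.2 _ hmem
  have hss : TW κ β \ TW κ α ⊆ A \ TW κ α := fun x hx => ⟨hsub hx.1, hx.2⟩
  constructor
  · exact lt_of_le_of_lt (Cardinal.mk_le_mk_of_subset hss) hAα
  · have h1 : #↥((A \ TW κ β) \ (A \ TW κ α)) = κ := diff_big hκ hdiff hAα
    have h2 : (A \ TW κ β) \ (A \ TW κ α) ⊆ TW κ α \ TW κ β := by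
      rintro x ⟨⟨hxA, hxβ⟩, hx2⟩
      refine ⟨?_, hxβ⟩
      by_contra hxα
      exact hx2 ⟨hxA, hxα⟩
    refine le_antisymm (set_le_kappa κ _) ?_
    conv_lhs => rw [← h1]
    exact Cardinal.mk_le_mk_of_subset h2

private lemma exists_bad {κ : Cardinal.{u}} (hunc : ℵ₀ < κ) :
    ∃ β : Ordinal.{u}, ¬∃ A, IsPseudoInter κ (TW κ '' Iio β) A := by
  by_contra hall
  push_neg at hall
  set Θ : Ordinal.{u} := (Order.succ ((2 : Cardinal.{u}) ^ κ)).ord with hΘ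
  have key : ∀ α β : Ordinal.{u}, α < β → TW κ α ≠ TW κ β := by
    intro α β hab heq
    have hd := (TW_almost hunc.le hab (hall β)).2
    rw [heq, Set.diff_self, Cardinal.mk_emptyCollection] at hd
    exact (Cardinal.aleph0_pos.trans hunc).ne hd
  have hinj : Function.Injective (fun x : ↥(Iio Θ) => TW κ x.1) := by
    rintro ⟨x, hx⟩ ⟨y, hy⟩ hxy
    simp only at hxy
    by_contra hne
    have hne' : x ≠ y := fun h => hne (Subtype.ext h)
    rcases lt_or_gt_of_ne hne' with h | h
    · exact key x y h hxy
    · exact key y x h hxy.symm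
  have hcard : Cardinal.lift.{u} #↥(Iio Θ) ≤
      Cardinal.lift.{u + 1} #(Set κ.ord.ToType) :=
    Cardinal.lift_mk_le'.2 ⟨⟨fun x => TW κ x.1, hinj⟩⟩
  rw [Ordinal.mk_Iio_ordinal, Cardinal.card_ord, Cardinal.mk_set,
    Cardinal.mk_ord_toType, Cardinal.lift_lift, Cardinal.lift_le] at hcard
  exact (Order.lt_succ ((2 : Cardinal.{u}) ^ κ)).not_ge hcard

/-- If κ is an uncountable cardinal with cf(κ) = ω,
then t*(κ) is uncountable. -/
theorem aleph0_lt_tStar (κ : Cardinal.{u}) (hunc : ℵ₀ < κ)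
    (hcof : κ.ord.cof = ℵ₀) :
    ℵ₀ < tStarNumber κ := by
  have hκ : ℵ₀ ≤ κ := hunc.le
  -- the set of bad stages is nonempty; take its minimum
  set Bad : Set Ordinal.{u} := {β | ¬∃ A, IsPseudoInter κ (TW κ '' Iio β) A} with hBad
  have hBadne : Bad.Nonempty := exists_bad hunc
  set β₀ : Ordinal.{u} := WellFounded.min wellFounded_lt Bad hBadne with hβ₀
  have hmin : ¬∃ A, IsPseudoInter κ (TW κ '' Iio β₀) A :=
    WellFounded.min_mem wellFounded_lt Bad hBadne
  have hgood : ∀ α < β₀, ∃ A, IsPseudoInter κ (TW κ '' Iio α) A := by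
    intro α hα
    by_contra h
    exact WellFounded.not_lt_min wellFounded_lt Bad h hα
  -- the witness tower
  have hw1 : ∀ α < β₀, #↥(TW κ α) = κ := fun α hα =>
    (TW_spec hκ (hgood α hα)).choose_spec.2.2.1
  have hw2 : ∀ α < β₀, ∀ β < β₀, α ≤ β → AlmostSub κ (TW κ β) (TW κ α) := by
    intro α hα β hβ hab
    rcases eq_or_lt_of_le hab with rfl | h
    · rw [AlmostSub, Set.diff_self, Cardinal.mk_emptyCollection]
      exact Cardinal.aleph0_pos.trans hunc
    · exact (TW_almost hκ h (hgood β hβ)).1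
  have hSne : {c | ∃ (δ : Ordinal.{u}) (T : Ordinal.{u} → Set κ.ord.ToType),
      (∀ α < δ, #(↥(T α)) = κ) ∧
      (∀ α < δ, ∀ β < δ, α ≤ β → AlmostSub κ (T β) (T α)) ∧
      (¬∃ A, IsPseudoInter κ (T '' Iio δ) A) ∧ #(↥(T '' Iio δ)) = c}.Nonempty :=
    ⟨#↥(TW κ '' Iio β₀), β₀, TW κ, hw1, hw2, hmin, rfl⟩
  have hmem := csInf_mem hSne
  rw [← not_le]
  intro hle
  rw [tStarNumber] at hle
  obtain ⟨δ, T, h1, h2, h3, h4⟩ := hmem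
  exact h3 (tower_pi hunc hcof δ T h1 h2 (h4.le.trans hle))

end PT
end
end

section
/- Let κ be a regular uncountable cardinal, μ < b(κ), and let (E_γ)_{γ<μ} be a family of κ-sized subsets of κ. Then there is a club X ⊆ κ such that for every γ < μ, for all but fewer than κ many ξ ∈ X, E_γ ∩ [ξ, s_X(ξ)) ≠ ∅, where s_X(ξ) = min(X \ (ξ+1)). -/
noncomputable section

open Cardinal Set

universe u

namespace PT

section AuxPT

variable {κ : Cardinal.{u}}

lemma mk_Iic_lt_aux (hreg : κ.IsRegular) (a : κ.ord.ToType) : #(↥(Iic a)) < κ := by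
  have h1 : #(↥(Iio a)) < κ := Cardinal.mk_Iio_ord_toType a
  have h2 : (Iic a : Set κ.ord.ToType) = insert a (Iio a) := Set.Iio_insert.symm
  rw [h2]
  calc #(↥(insert a (Iio a))) ≤ #(↥(Iio a)) + 1 := Cardinal.mk_insert_le
    _ < κ := Cardinal.add_lt_of_lt hreg.aleph0_le h1
        (lt_of_lt_of_le Cardinal.one_lt_aleph0 hreg.aleph0_le)

lemma mk_toType_aux : #κ.ord.ToType = κ := by
  rw [Cardinal.mk_toType, Cardinal.card_ord]

lemma exists_ub_aux (hreg : κ.IsRegular) {S : Set κ.ord.ToType} (hS : #(↥S) < κ) :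
    ∃ b, ∀ s ∈ S, s ≤ b := by
  by_contra h
  push_neg at h
  have hcov : (univ : Set κ.ord.ToType) ⊆ ⋃ s : S, Iic (s : κ.ord.ToType) := by
    intro x _
    obtain ⟨s, hs, hlt⟩ := h x
    exact Set.mem_iUnion.2 ⟨⟨s, hs⟩, hlt.le⟩
  have hle : κ ≤ Cardinal.sum (fun s : S => #(↥(Iic (s : κ.ord.ToType)))) := by
    calc κ = #(univ : Set κ.ord.ToType) := by rw [Cardinal.mk_univ, mk_toType_aux]
      _ ≤ #(↥(⋃ s : S, Iic (s : κ.ord.ToType))) := Cardinal.mk_le_mk_of_subset hcov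
      _ ≤ _ := Cardinal.mk_iUnion_le_sum_mk
  have hlt : Cardinal.sum (fun s : S => #(↥(Iic (s : κ.ord.ToType)))) < κ :=
    Cardinal.sum_lt_of_isRegular hreg hS (fun s => mk_Iic_lt_aux hreg s)
  exact absurd hle hlt.not_ge

lemma exists_gt_of_mk_eq_aux (hreg : κ.IsRegular) {S : Set κ.ord.ToType} (hS : #(↥S) = κ)
    (a : κ.ord.ToType) : ∃ b ∈ S, a < b := by
  by_contra h
  push_neg at h
  have hsub : S ⊆ Iic a := fun s hs => h s hs
  have := Cardinal.mk_le_mk_of_subset hsub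
  rw [hS] at this
  exact (mk_Iic_lt_aux hreg a).not_ge this

lemma nextIn_mem_aux {X : Set κ.ord.ToType} {ξ : κ.ord.ToType}
    (h : {η : κ.ord.ToType | η ∈ X ∧ ξ < η}.Nonempty) :
    nextIn κ X ξ ∈ X ∧ ξ < nextIn κ X ξ := by
  have : nextIn κ X ξ ∈ {η : κ.ord.ToType | η ∈ X ∧ ξ < η} := by
    unfold nextIn
    rw [dif_pos h]
    exact wellFounded_lt.min_mem _ h
  exact this

end AuxPT

/-- Let κ be regular uncountable, μ < b(κ), and (E_γ)_{γ<μ} a family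
of κ-sized subsets of κ. Then there is a club X ⊆ κ such that for every γ < μ,
for all but fewer than κ many ξ ∈ X, E_γ ∩ [ξ, s_X(ξ)) ≠ ∅. -/
theorem exists_club_hitting_intervals (κ : Cardinal.{u}) (hreg : κ.IsRegular)
    (hunc : ℵ₀ < κ) (μ : Cardinal.{u}) (hμ : μ < bNumber κ)
    (E : Ordinal.{u} → Set κ.ord.ToType) (hE : ∀ γ < μ.ord, #(↥(E γ)) = κ) :
    ∃ X : Set κ.ord.ToType, IsClubIn κ X ∧
      ∀ γ < μ.ord,
        #(↥{ξ : κ.ord.ToType | ξ ∈ X ∧ E γ ∩ Ico ξ (nextIn κ X ξ) = ∅}) < κ := by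
  classical
  -- the function picking the next element of `E γ`
  set f : Ordinal.{u} → κ.ord.ToType → κ.ord.ToType := fun γ ξ => nextIn κ (E γ) ξ with hf
  have hfspec : ∀ γ < μ.ord, ∀ ξ, f γ ξ ∈ E γ ∧ ξ < f γ ξ := by
    intro γ hγ ξ
    have hne : {η : κ.ord.ToType | η ∈ E γ ∧ ξ < η}.Nonempty := by
      obtain ⟨b, hb, hlt⟩ := exists_gt_of_mk_eq_aux hreg (hE γ hγ) ξ
      exact ⟨b, hb, hlt⟩
    exact nextIn_mem_aux hne
  -- find a single bound using μ < b(κ)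
  set B : Set (κ.ord.ToType → κ.ord.ToType) :=
    Set.range (fun i : μ.ord.ToType => f (ordOf i)) with hB
  have hBcard : #(↥B) ≤ μ := by
    calc #(↥B) ≤ #μ.ord.ToType := Cardinal.mk_range_le
      _ = μ := by rw [Cardinal.mk_toType, Cardinal.card_ord]
  obtain ⟨g, hg⟩ : ∃ g, ∀ h ∈ B, LeStar κ h g := by
    by_contra hno
    have hmem : bNumber κ ≤ #(↥B) := csInf_le' ⟨B, hno, rfl⟩
    exact (hmem.trans hBcard).not_gt hμ
  have hgf : ∀ γ < μ.ord, LeStar κ (f γ) g := by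
    intro γ hγ
    refine hg _ ⟨Ordinal.ToType.mk (o := μ.ord) ⟨γ, hγ⟩, ?_⟩
    simp only [ordOf, OrderIso.symm_apply_apply]
  -- no maximum element
  have hnomax : ∀ a : κ.ord.ToType, ∃ b, a < b := by
    intro a
    by_contra hc
    push_neg at hc
    have hsub : (univ : Set κ.ord.ToType) ⊆ Iic a := fun x _ => hc x
    have := Cardinal.mk_le_mk_of_subset hsub
    rw [Cardinal.mk_univ, mk_toType_aux] at this
    exact (mk_Iic_lt_aux hreg a).not_ge this
  -- a strictly increasing dominating function
  set g' : κ.ord.ToType → κ.ord.ToType := fun ξ => nextIn κ univ (max (g ξ) ξ) with hg'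
  have hg'spec : ∀ ξ, g ξ < g' ξ ∧ ξ < g' ξ := by
    intro ξ
    have hne : {η : κ.ord.ToType | η ∈ Set.univ ∧ max (g ξ) ξ < η}.Nonempty := by
      obtain ⟨b, hb⟩ := hnomax (max (g ξ) ξ)
      exact ⟨b, trivial, hb⟩
    have h2 := (nextIn_mem_aux hne).2
    exact ⟨lt_of_le_of_lt (le_max_left _ _) h2, lt_of_le_of_lt (le_max_right _ _) h2⟩
  -- the club of closure points of g'
  set X : Set κ.ord.ToType := {ξ | ∀ η, η < ξ → g' η < ξ} with hX
  have hXub : ∀ a : κ.ord.ToType, ∃ b ∈ X, a < b := by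
    intro a
    have step : ∀ d : κ.ord.ToType, ∃ b, ∀ η ≤ d, g' η ≤ b := by
      intro d
      have himg : #(↥(g' '' Iic d)) < κ :=
        lt_of_le_of_lt Cardinal.mk_image_le (mk_Iic_lt_aux hreg d)
      obtain ⟨b, hb⟩ := exists_ub_aux hreg himg
      exact ⟨b, fun η hη => hb _ ⟨η, hη, rfl⟩⟩
    choose F hF using step
    set c : ℕ → κ.ord.ToType := fun n => Nat.rec (g' a) (fun _ cn => F cn) n with hc
    have hcs : ∀ n, c (n + 1) = F (c n) := fun n => rfl
    have hmono : ∀ n, c n < c (n + 1) := by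
      intro n
      have h1 : g' (c n) ≤ c (n + 1) := by rw [hcs]; exact hF (c n) (c n) le_rfl
      exact lt_of_lt_of_le (hg'spec (c n)).2 h1
    have hrange : #(↥(Set.range c)) < κ :=
      lt_of_le_of_lt (Cardinal.mk_le_aleph0_iff.mpr (Set.countable_range c).to_subtype) hunc
    obtain ⟨u, hu⟩ := exists_ub_aux hreg hrange
    have hUBne : {v : κ.ord.ToType | ∀ n, c n ≤ v}.Nonempty :=
      ⟨u, fun n => hu _ ⟨n, rfl⟩⟩
    set b := wellFounded_lt.min {v : κ.ord.ToType | ∀ n, c n ≤ v} hUBne with hbdef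
    have hbUB : ∀ n, c n ≤ b := wellFounded_lt.min_mem _ hUBne
    refine ⟨b, ?_, ?_⟩
    · intro η hη
      have hex : ∃ n, η < c n := by
        by_contra hcon
        push_neg at hcon
        exact (wellFounded_lt.not_lt_min {v : κ.ord.ToType | ∀ n, c n ≤ v} (x := η) hcon) hη
      obtain ⟨n, hn⟩ := hex
      have h1 : g' η ≤ c (n + 1) := by rw [hcs]; exact hF (c n) η hn.le
      exact lt_of_le_of_lt h1 (lt_of_lt_of_le (hmono (n + 1)) (hbUB (n + 2)))
    · exact lt_of_lt_of_le (hg'spec a).2 (hbUB 0)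
  have hXclub : IsClubIn κ X := by
    refine ⟨hXub, ?_⟩
    intro a _ hlub η hη
    have hex : ∃ x ∈ X ∩ Iio a, η < x := by
      by_contra hcon
      push_neg at hcon
      have hub : η ∈ upperBounds (X ∩ Iio a) := fun x hx => hcon x hx
      exact absurd (hlub.2 hub) (not_le.2 hη)
    obtain ⟨x, ⟨hxX, hxa⟩, hηx⟩ := hex
    exact lt_trans (hxX η hηx) hxa
  refine ⟨X, hXclub, ?_⟩
  intro γ hγ
  have hsub : {ξ : κ.ord.ToType | ξ ∈ X ∧ E γ ∩ Ico ξ (nextIn κ X ξ) = ∅} ⊆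
      {ξ : κ.ord.ToType | ¬f γ ξ ≤ g ξ} := by
    rintro ξ ⟨hξX, hempty⟩
    intro hle
    have hne : {η : κ.ord.ToType | η ∈ X ∧ ξ < η}.Nonempty := by
      obtain ⟨b, hbX, hb⟩ := hXub ξ
      exact ⟨b, hbX, hb⟩
    obtain ⟨hsX, hξs⟩ := nextIn_mem_aux hne
    have hfs : f γ ξ < nextIn κ X ξ :=
      lt_trans (lt_of_le_of_lt hle (hg'spec ξ).1) (hsX ξ hξs)
    have hmem : f γ ξ ∈ E γ ∩ Ico ξ (nextIn κ X ξ) :=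
      ⟨(hfspec γ hγ ξ).1, (hfspec γ hγ ξ).2.le, hfs⟩
    rw [hempty] at hmem
    exact hmem
  exact lt_of_le_of_lt (Cardinal.mk_le_mk_of_subset hsub) (hgf γ hγ)

end PT
end
end
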